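/- If $L$ is a lattice of rank $k$ obtained by the greedy basis construction—$v_1$ a shortest nonzero vector, and inductively $v_i$ a shortest lift of a shortest construction in successive quotients—then setting $\alpha_i = \operatorname{covol}(L_i/L_{i-1})$ where $L_i = \mathbb{Z}v_1 + \cdots + \mathbb{Z}v_i$, one has $\alpha_i \ge \frac{\sqrt{3}}{2}\,\alpha_{i-1}$ for all $2 \le i \le k$, and $\|v_i\|^2 \le \alpha_i^2 + \frac{1}{4}(\alpha_1^2+\cdots+\alpha_{i-1}^2)$. -/

import Mathlib

/-- Orthogonal projection onto the orthogonal complement of the span of `v j` for `j < i`;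
this computes the image of a vector in the metrized quotient `L/L_{i-1}`. -/
noncomputable def quotProj (k : ℕ) (v : Fin k → EuclideanSpace ℝ (Fin k)) (i : ℕ)
    (x : EuclideanSpace ℝ (Fin k)) : EuclideanSpace ℝ (Fin k) :=
  (Submodule.orthogonalProjection ((Submodule.span ℝ (v '' {j | (j : ℕ) < i}))ᗮ) x :
    EuclideanSpace ℝ (Fin k))

/-- `αᵢ = covol(Lᵢ/Lᵢ₋₁)`, the length of the image of `vᵢ` in the quotient `L/Lᵢ₋₁`. -/
noncomputable def alphaCovol (k : ℕ) (v : Fin k → EuclideanSpace ℝ (Fin k)) (i : Fin k) : ℝ :=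
  ‖quotProj k v i (v i)‖

def KK (k : ℕ) (v : Fin k → EuclideanSpace ℝ (Fin k)) (i : ℕ) :
    Submodule ℝ (EuclideanSpace ℝ (Fin k)) :=
  Submodule.span ℝ (v '' {j : Fin k | (j : ℕ) < i})

section helpers
variable {k : ℕ} {v : Fin k → EuclideanSpace ℝ (Fin k)} {i : ℕ}

lemma qp_def (x) : quotProj k v i x =
    (Submodule.orthogonalProjection (KK k v i)ᗮ x : EuclideanSpace ℝ (Fin k)) := rfl

lemma qp_mem (x) : quotProj k v i x ∈ (KK k v i)ᗮ := Submodule.coe_mem _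

lemma qp_add (x y) : quotProj k v i (x + y) = quotProj k v i x + quotProj k v i y := by
  simp [quotProj]

lemma qp_smul (c : ℝ) (x) : quotProj k v i (c • x) = c • quotProj k v i x := by
  simp [quotProj]

lemma qp_eq_self {x} (h : x ∈ (KK k v i)ᗮ) : quotProj k v i x = x := by
  have h' := Submodule.starProjection_eq_self_iff.mpr h
  rw [qp_def]; exact (Submodule.starProjection_apply _ x).symm.trans h'

lemma qp_eq_zero_of_mem {x} (h : x ∈ KK k v i) : quotProj k v i x = 0 := by
  have := Submodule.orthogonalProjectionOnto_apply_of_mem_orthogonal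
    (K := (KK k v i)ᗮ) (Submodule.le_orthogonal_orthogonal _ h)
  rw [qp_def, this, Submodule.coe_zero]

lemma sub_qp_mem (x) : x - quotProj k v i x ∈ KK k v i := by
  have h := Submodule.starProjection_add_starProjection_orthogonal (K := KK k v i) x
  simp only [Submodule.starProjection_apply] at h
  have h2 : x - quotProj k v i x
      = (Submodule.orthogonalProjection (KK k v i) x : EuclideanSpace ℝ (Fin k)) := by
    rw [qp_def]; exact sub_eq_of_eq_add h.symm
  rw [h2]; exact Submodule.coe_mem _

lemma qp_ne_zero {x} (h : x ∉ KK k v i) : quotProj k v i x ≠ 0 := by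
  intro h0
  apply h
  have h1 := sub_qp_mem (v := v) (i := i) x
  rwa [h0, sub_zero] at h1

lemma pyth {S : Submodule ℝ (EuclideanSpace ℝ (Fin k))} {a b : EuclideanSpace ℝ (Fin k)}
    (ha : a ∈ Sᗮ) (hb : b ∈ S) : ‖a + b‖ ^ 2 = ‖a‖ ^ 2 + ‖b‖ ^ 2 := by
  rw [norm_add_sq_real, (Submodule.mem_orthogonal' S a).mp ha b hb]; ring

lemma zspan_le {s : Set (EuclideanSpace ℝ (Fin k))} {x} (h : x ∈ Submodule.span ℤ s) :
    x ∈ Submodule.span ℝ s := by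
  have h1 : Submodule.span ℤ s ≤ (Submodule.span ℝ s).restrictScalars ℤ :=
    Submodule.span_le.mpr Submodule.subset_span
  exact h1 h

end helpers

section main
variable {k : ℕ} {v : Fin k → EuclideanSpace ℝ (Fin k)}

lemma set_succ {n : ℕ} (hn : n < k) :
    {j : Fin k | (j : ℕ) < n + 1} = insert ⟨n, hn⟩ {j : Fin k | (j : ℕ) < n} := by
  ext j
  simp [Nat.lt_succ_iff_lt_or_eq, Fin.ext_iff, or_comm]
  omega

lemma set_stall {k : ℕ} {n : ℕ} (hn : ¬ n < k) :
    {j : Fin k | (j : ℕ) < n + 1} = {j : Fin k | (j : ℕ) < n} := by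
  ext j
  have := j.isLt
  constructor <;> intro <;> simp_all <;> omega

lemma filter_succ {n : ℕ} (hn : n < k) :
    Finset.univ.filter (fun j : Fin k => (j : ℕ) < n + 1)
      = insert ⟨n, hn⟩ (Finset.univ.filter (fun j : Fin k => (j : ℕ) < n)) := by
  ext j
  simp [Nat.lt_succ_iff_lt_or_eq, Fin.ext_iff, or_comm]
  omega

lemma sizeRed (n : ℕ) :
    ∀ w ∈ KK k v n, ∃ u ∈ Submodule.span ℤ (v '' {j : Fin k | (j : ℕ) < n}),
      ‖w + u‖ ^ 2 ≤ (1 / 4) *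
        ∑ j ∈ Finset.univ.filter (fun j : Fin k => (j : ℕ) < n), alphaCovol k v j ^ 2 := by
  induction n with
  | zero =>
    intro w hw
    have hs : {j : Fin k | (j : ℕ) < 0} = ∅ := by ext j; simp
    rw [KK, hs] at hw
    simp only [Set.image_empty, Submodule.span_empty, Submodule.mem_bot] at hw
    refine ⟨0, Submodule.zero_mem _, ?_⟩
    rw [hw]
    simp
  | succ n IH =>
    intro w hw
    by_cases hn : n < k
    · rw [KK, set_succ hn, Set.image_insert_eq, Submodule.span_insert] at hw
      obtain ⟨y, hy, z, hz, hyz⟩ := Submodule.mem_sup.mp hw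
      obtain ⟨c, rfl⟩ := Submodule.mem_span_singleton.mp hy
      have hvP : v ⟨n, hn⟩ - quotProj k v n (v ⟨n, hn⟩) ∈ KK k v n := sub_qp_mem _
      obtain ⟨u', hu', hb⟩ := IH
        (z + (c - ((round c : ℤ) : ℝ)) • (v ⟨n, hn⟩ - quotProj k v n (v ⟨n, hn⟩)))
        (Submodule.add_mem _ hz (Submodule.smul_mem _ _ hvP))
      refine ⟨u' - (round c : ℤ) • v ⟨n, hn⟩, ?_, ?_⟩
      · rw [set_succ hn, Set.image_insert_eq, Submodule.span_insert]
        exact Submodule.sub_mem _ (Submodule.mem_sup_right hu')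
          (Submodule.mem_sup_left
            (Submodule.smul_mem _ _ (Submodule.mem_span_singleton_self _)))
      · have key : c • v ⟨n, hn⟩ + z + (u' - (round c : ℤ) • v ⟨n, hn⟩)
            = (c - ((round c : ℤ) : ℝ)) • quotProj k v n (v ⟨n, hn⟩)
              + (z + (c - ((round c : ℤ) : ℝ)) • (v ⟨n, hn⟩ - quotProj k v n (v ⟨n, hn⟩)) + u') := by
          have hcast : (round c : ℤ) • v ⟨n, hn⟩ = ((round c : ℤ) : ℝ) • v ⟨n, hn⟩ := by
            rw [Int.cast_smul_eq_zsmul]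
          rw [hcast]
          module
        rw [← hyz, key, pyth (Submodule.smul_mem _ _ (qp_mem _))
          (Submodule.add_mem _ (Submodule.add_mem _ hz (Submodule.smul_mem _ _ hvP))
            (zspan_le hu'))]
        have h1 : ‖(c - ((round c : ℤ) : ℝ)) • quotProj k v n (v ⟨n, hn⟩)‖ ^ 2
            = (c - ((round c : ℤ) : ℝ)) ^ 2 * ‖quotProj k v n (v ⟨n, hn⟩)‖ ^ 2 := by
          rw [norm_smul, mul_pow, Real.norm_eq_abs, sq_abs]
        have h2 : (c - ((round c : ℤ) : ℝ)) ^ 2 ≤ 1 / 4 := by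
          have h5 := abs_sub_round c
          nlinarith [sq_abs (c - ((round c : ℤ) : ℝ)), abs_nonneg (c - ((round c : ℤ) : ℝ))]
        have h3 : ‖quotProj k v n (v ⟨n, hn⟩)‖ = alphaCovol k v ⟨n, hn⟩ := rfl
        rw [filter_succ hn, Finset.sum_insert (by simp), h1, h3]
        nlinarith [hb, mul_le_mul_of_nonneg_right h2 (sq_nonneg (alphaCovol k v ⟨n, hn⟩))]
    · have hs := set_stall (k := k) hn
      have hf : Finset.univ.filter (fun j : Fin k => (j : ℕ) < n + 1)
          = Finset.univ.filter (fun j : Fin k => (j : ℕ) < n) := by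
        ext j; have := j.isLt; simp; omega
      rw [KK, hs] at hw
      rw [hs, hf]
      exact IH w hw

end main

/-- If `v₁, …, v_k` is a greedy basis of a rank-`k` lattice `L` — each `vᵢ` is of minimal
length among lifts of a shortest nonzero vector of `L/Lᵢ₋₁` — then with
`αᵢ = covol(Lᵢ/Lᵢ₋₁)` one has `αᵢ ≥ (√3/2) αᵢ₋₁` for `2 ≤ i ≤ k`, and
`‖vᵢ‖² ≤ αᵢ² + (1/4)(α₁² + ⋯ + αᵢ₋₁²)`. -/
theorem stmt8 (k : ℕ) (v : Fin k → EuclideanSpace ℝ (Fin k))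
    (hind : LinearIndependent ℝ v)
    (hlift : ∀ i : Fin k, ∀ u ∈ Submodule.span ℤ (v '' {j | j < i}), ‖v i‖ ≤ ‖v i + u‖)
    (hquot : ∀ i : Fin k, ∀ x ∈ Submodule.span ℤ (Set.range v),
      quotProj k v i x ≠ 0 → ‖quotProj k v i (v i)‖ ≤ ‖quotProj k v i x‖) :
    (∀ i j : Fin k, (j : ℕ) + 1 = (i : ℕ) →
      Real.sqrt 3 / 2 * alphaCovol k v j ≤ alphaCovol k v i) ∧
    (∀ i : Fin k, ‖v i‖ ^ 2 ≤
      alphaCovol k v i ^ 2 +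
        (1 / 4) * ∑ j ∈ Finset.univ.filter (fun j => j < i), alphaCovol k v j ^ 2) := by
  have halpha : ∀ l : Fin k, 0 ≤ alphaCovol k v l := fun l => norm_nonneg _
  have hsetlt : ∀ i : Fin k, {j : Fin k | j < i} = {j : Fin k | (j : ℕ) < (i : ℕ)} := by
    intro i; ext j; exact Fin.lt_def
  constructor
  · -- part 1
    intro i j hji
    have hjk : (j : ℕ) < k := j.isLt
    have hPmem : quotProj k v (i : ℕ) (v i) ∈ (KK k v (i : ℕ))ᗮ := qp_mem _
    have hvi : v i - quotProj k v (i : ℕ) (v i) ∈ KK k v (i : ℕ) := sub_qp_mem _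
    rw [KK, ← hji, set_succ hjk, Fin.eta, Set.image_insert_eq, Submodule.span_insert] at hvi
    obtain ⟨y, hy, z, hz, hyz⟩ := Submodule.mem_sup.mp hvi
    obtain ⟨c, rfl⟩ := Submodule.mem_span_singleton.mp hy
    rw [hji] at hyz
    have hKle : KK k v (j : ℕ) ≤ KK k v (i : ℕ) := by
      apply Submodule.span_mono
      apply Set.image_mono
      intro l hl
      simp only [Set.mem_setOf_eq] at hl ⊢
      omega
    have hvj : v j ∈ KK k v (i : ℕ) := by
      apply Submodule.subset_span
      exact ⟨j, by simp [← hji], rfl⟩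
    have hPile : quotProj k v (i : ℕ) (v i) ∈ (KK k v (j : ℕ))ᗮ :=
      Submodule.orthogonal_le hKle hPmem
    have hzsm : (round c : ℤ) • v j = ((round c : ℤ) : ℝ) • v j := by
      rw [Int.cast_smul_eq_zsmul]
    have hx : v i - (round c : ℤ) • v j
        = quotProj k v (i : ℕ) (v i) + z + (c - ((round c : ℤ) : ℝ)) • v j := by
      rw [hzsm]
      have h7 : quotProj k v (i : ℕ) (v i) + z + (c - ((round c : ℤ) : ℝ)) • v j
          = v i - ((round c : ℤ) : ℝ) • v j := by
        calc quotProj k v (i : ℕ) (v i) + z + (c - ((round c : ℤ) : ℝ)) • v j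
            = quotProj k v (i : ℕ) (v i) + (c • v j + z) - ((round c : ℤ) : ℝ) • v j := by
              module
          _ = quotProj k v (i : ℕ) (v i) + (v i - quotProj k v (i : ℕ) (v i))
                - ((round c : ℤ) : ℝ) • v j := by rw [hyz]
          _ = v i - ((round c : ℤ) : ℝ) • v j := by module
      exact h7.symm
    have hq : quotProj k v (j : ℕ) (v i - (round c : ℤ) • v j)
        = quotProj k v (i : ℕ) (v i) + (c - ((round c : ℤ) : ℝ)) • quotProj k v (j : ℕ) (v j) := by
      rw [hx, qp_add, qp_add, qp_smul, qp_eq_self hPile, qp_eq_zero_of_mem hz, add_zero]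
    have hqvj : quotProj k v (j : ℕ) (v j) ∈ KK k v (i : ℕ) := by
      have h1 : v j - quotProj k v (j : ℕ) (v j) ∈ KK k v (i : ℕ) := hKle (sub_qp_mem _)
      have : quotProj k v (j : ℕ) (v j) = v j - (v j - quotProj k v (j : ℕ) (v j)) := by abel
      rw [this]
      exact Submodule.sub_mem _ hvj h1
    have hnorm : ‖quotProj k v (j : ℕ) (v i - (round c : ℤ) • v j)‖ ^ 2
        = alphaCovol k v i ^ 2 + (c - ((round c : ℤ) : ℝ)) ^ 2 * alphaCovol k v j ^ 2 := by
      rw [hq, pyth hPmem (Submodule.smul_mem _ _ hqvj), norm_smul, mul_pow,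
        Real.norm_eq_abs, sq_abs]
      rfl
    have hPne : quotProj k v (i : ℕ) (v i) ≠ 0 := by
      apply qp_ne_zero
      exact hind.notMem_span_image (by simp)
    have hαpos : 0 < alphaCovol k v i := by
      rw [alphaCovol]
      exact norm_pos_iff.mpr hPne
    have hne : quotProj k v (j : ℕ) (v i - (round c : ℤ) • v j) ≠ 0 := by
      intro h0
      rw [h0, norm_zero] at hnorm
      nlinarith [sq_nonneg ((c - ((round c : ℤ) : ℝ)) * alphaCovol k v j)]
    have hmem : v i - (round c : ℤ) • v j ∈ Submodule.span ℤ (Set.range v) :=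
      Submodule.sub_mem _ (Submodule.subset_span ⟨i, rfl⟩)
        (Submodule.smul_mem _ _ (Submodule.subset_span ⟨j, rfl⟩))
    have hle := hquot j _ hmem hne
    have hαj : alphaCovol k v j = ‖quotProj k v (j : ℕ) (v j)‖ := rfl
    have hsq : alphaCovol k v j ^ 2
        ≤ alphaCovol k v i ^ 2 + (c - ((round c : ℤ) : ℝ)) ^ 2 * alphaCovol k v j ^ 2 := by
      rw [← hnorm, hαj]
      exact pow_le_pow_left₀ (norm_nonneg _) hle 2
    have h2 : (c - ((round c : ℤ) : ℝ)) ^ 2 ≤ 1 / 4 := by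
      have h5 := abs_sub_round c
      nlinarith [sq_abs (c - ((round c : ℤ) : ℝ)), abs_nonneg (c - ((round c : ℤ) : ℝ))]
    have hkey : (Real.sqrt 3 / 2 * alphaCovol k v j) ^ 2 ≤ alphaCovol k v i ^ 2 := by
      rw [mul_pow, div_pow, Real.sq_sqrt (by norm_num : (3:ℝ) ≥ 0)]
      nlinarith [sq_nonneg (alphaCovol k v j), mul_le_mul_of_nonneg_right h2
        (sq_nonneg (alphaCovol k v j))]
    calc Real.sqrt 3 / 2 * alphaCovol k v j
        = Real.sqrt ((Real.sqrt 3 / 2 * alphaCovol k v j) ^ 2) := by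
          rw [Real.sqrt_sq (mul_nonneg (by positivity) (halpha j))]
      _ ≤ Real.sqrt (alphaCovol k v i ^ 2) := Real.sqrt_le_sqrt hkey
      _ = alphaCovol k v i := Real.sqrt_sq (halpha i)
  · -- part 2
    intro i
    obtain ⟨u, hu, hb⟩ := sizeRed (v := v) (i : ℕ) (v i - quotProj k v (i : ℕ) (v i))
      (sub_qp_mem _)
    have hu' : u ∈ Submodule.span ℤ (v '' {j | j < i}) := by rw [hsetlt i]; exact hu
    have hle := hlift i u hu'
    have hdec : v i + u = quotProj k v (i : ℕ) (v i)
        + (v i - quotProj k v (i : ℕ) (v i) + u) := by abel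
    have hpy : ‖v i + u‖ ^ 2 = alphaCovol k v i ^ 2
        + ‖v i - quotProj k v (i : ℕ) (v i) + u‖ ^ 2 := by
      rw [hdec, pyth (qp_mem _) (Submodule.add_mem _ (sub_qp_mem _) (zspan_le hu))]
      rfl
    have hfe : Finset.univ.filter (fun j : Fin k => j < i)
        = Finset.univ.filter (fun j : Fin k => (j : ℕ) < (i : ℕ)) := by
      ext j
      simp only [Finset.mem_filter, Finset.mem_univ, true_and, Fin.lt_def]
    rw [hfe]
    have := pow_le_pow_left₀ (norm_nonneg (v i)) hle 2
    linarith [hb, hpy, this]
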